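/- Under the strong metabolic constraint, the total expected relative reward equals the mutual information of the Gibbs policy: if ∑_s π*(a|s)·P_S(s) = P_A(a) for every action a, then ∑_s P_S(s)·∑_a π*(a|s)·R̄(s,a) = I_{π*}, where I_{π*} := ∑_{s} ∑_{a : π*(a|s) > 0} P_S(s)·π*(a|s)·log(π*(a|s)/π*(a)) is the mutual information between situations and actions and π*(a) := ∑_s π*(a|s)·P_S(s). -/

import Mathlib

open scoped Classical

/-- Under the strong metabolic constraint, the total expected relative reward equals
the mutual information of the Gibbs policy: if `∑ s, gibbs s a * P_S s = P_A a` for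
every action `a`, then
`∑ s, P_S s * ∑ a, gibbs s a * Rbar s a
  = ∑ s, ∑_{a : gibbs s a > 0} P_S s * gibbs s a * log (gibbs s a / marg a)`. -/
theorem total_relative_reward_eq_mutual_information
    {S A : Type*} [Fintype S] [Nonempty S] [Fintype A] [Nonempty A]
    (P_S : S → ℝ) (hPSpos : ∀ s, 0 < P_S s) (hPSsum : ∑ s, P_S s = 1)
    (P_A : A → ℝ) (hPApos : ∀ a, 0 < P_A a) (hPAsum : ∑ a, P_A a = 1)
    (R : S → A → ℝ) (β : ℝ) (hβ : 0 < β)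
    (Z : S → ℝ) (hZ : ∀ s, Z s = ∑ a, P_A a * Real.exp (β * R s a))
    (gibbs : S → A → ℝ)
    (hgibbs : ∀ s a, gibbs s a = P_A a * Real.exp (β * R s a) / Z s)
    (Rbar : S → A → ℝ) (hRbar : ∀ s a, Rbar s a = β * R s a - Real.log (Z s))
    (marg : A → ℝ) (hmarg : ∀ a, marg a = ∑ s, gibbs s a * P_S s)
    (hMP : ∀ a, marg a = P_A a) :
    ∑ s, P_S s * ∑ a, gibbs s a * Rbar s a
      = ∑ s, ∑ a ∈ Finset.univ.filter (fun a => 0 < gibbs s a),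
          P_S s * gibbs s a * Real.log (gibbs s a / marg a) := by
  have hZpos : ∀ s, 0 < Z s := by
    intro s
    rw [hZ]
    exact Finset.sum_pos (fun a _ => mul_pos (hPApos a) (Real.exp_pos _))
      ⟨Classical.arbitrary A, Finset.mem_univ _⟩
  have hgpos : ∀ s a, 0 < gibbs s a := fun s a => by
    rw [hgibbs]
    exact div_pos (mul_pos (hPApos a) (Real.exp_pos _)) (hZpos s)
  refine Finset.sum_congr rfl (fun s _ => ?_)
  rw [Finset.mul_sum]
  rw [Finset.filter_true_of_mem (fun a _ => hgpos s a)]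
  refine Finset.sum_congr rfl (fun a _ => ?_)
  have hlog : Real.log (gibbs s a / marg a) = Rbar s a := by
    rw [hMP, hgibbs, hRbar]
    have h1 : P_A a * Real.exp (β * R s a) / Z s / P_A a
        = Real.exp (β * R s a) / Z s := by
      rw [div_div, mul_comm (Z s), ← div_div, mul_div_cancel_left₀ _ (hPApos a).ne']
    rw [h1, Real.log_div (Real.exp_pos _).ne' (hZpos s).ne', Real.log_exp]
  rw [hlog]; ring
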